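/- Fix q ∈ S¹ with lift q̃ ∈ [0,1) and m ∈ ℤ. The set P_m^q(S¹,S¹) of continuous f : S¹ → S¹ whose lift f̃_α is a polynomial with f̃_α(0) = q̃ and f̃_α(1) = q̃ + m is dense, in the metric d₀, in C_m^q(S¹,S¹) = {f ∈ C(S¹,S¹) : f((1,0)) = q, W(f) = m}. -/
import Mathlib

open Real unitInterval

/-- The exponential covering map `p(t) = (cos 2πt, sin 2πt)`, with the unit circle
realized as the unit circle `Circle` in `ℂ`. -/
noncomputable def p (t : ℝ) : Circle := Circle.exp (2 * π * t)

/-- The loop `α : [0,1] → S¹`, `α(t) = (cos 2πt, sin 2πt)`. -/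
noncomputable def α (t : unitInterval) : Circle := p t

lemma p_eq_p_iff {a b : ℝ} : p a = p b ↔ ∃ n : ℤ, a = b + n := by
  unfold p
  rw [Circle.exp_eq_exp]
  constructor
  · rintro ⟨n, hn⟩
    refine ⟨n, ?_⟩
    have hπ : (π : ℝ) ≠ 0 := Real.pi_ne_zero
    have : 2 * π * a = 2 * π * (b + n) := by rw [hn]; ring
    have h2 : (2 * π) ≠ 0 := by positivity
    exact mul_left_cancel₀ h2 this
  · rintro ⟨n, hn⟩
    exact ⟨n, by rw [hn]; ring⟩

lemma p_inj_Ico {a b : ℝ} (ha : a ∈ Set.Ico (0:ℝ) 1) (hb : b ∈ Set.Ico (0:ℝ) 1)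
    (h : p a = p b) : a = b := by
  obtain ⟨n, hn⟩ := p_eq_p_iff.mp h
  have h1 : (n : ℝ) = a - b := by linarith
  have : |(n : ℝ)| < 1 := by rw [h1, abs_lt]; constructor <;> [skip; skip] <;>
    simp only [Set.mem_Ico] at ha hb <;> linarith [ha.1, ha.2, hb.1, hb.2]
  have : n = 0 := by exact_mod_cast (by rwa [← Int.cast_abs, ← Int.cast_one,
    Int.cast_lt, Int.abs_lt_one_iff] at this : n = 0)
  rw [this] at hn; simpa using hn

theorem stmt15 (L : C(Circle, Circle) → C(unitInterval, ℝ))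
    (hlift : ∀ f, ∀ t, p (L f t) = f (α t))
    (hL0 : ∀ f, L f 0 ∈ Set.Ico (0 : ℝ) 1)
    (q : Circle) (qt : ℝ) (hqt : qt ∈ Set.Ico (0 : ℝ) 1) (hpq : p qt = q) (m : ℤ)
    (f : C(Circle, Circle)) (hfq : f 1 = q) (hW : L f 1 - L f 0 = m)
    (ε : ℝ) (hε : 0 < ε) :
    ∃ g : C(Circle, Circle), g 1 = q ∧ L g 1 - L g 0 = m ∧
      (∃ qp : Polynomial ℝ, ∀ t : unitInterval, L g t = qp.eval (t : ℝ)) ∧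
      L g 0 = qt ∧ L g 1 = qt + m ∧
      2 * π * ⨆ t, |L f t - L g t| < ε := by
  have hπ : (0:ℝ) < π := Real.pi_pos
  -- the extension of L f to ℝ
  set F : ℝ → ℝ := fun x => L f (Set.projIcc 0 1 zero_le_one x) with hF
  have hFc : Continuous F := (L f).continuous.comp continuous_projIcc
  have hFt : ∀ t : unitInterval, F (t : ℝ) = L f t := by
    intro t; simp [hF, Set.projIcc_val]
  -- α 0 = 1 and p 0 = 1
  have hp0 : p 0 = 1 := by simp [p]
  have hα0 : α (0 : unitInterval) = 1 := by
    show p ((0 : unitInterval) : ℝ) = 1; rw [Set.Icc.coe_zero, hp0]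
  -- L f 0 = qt
  have hLf0 : L f 0 = qt := by
    apply p_inj_Ico (hL0 f) hqt
    rw [hlift f 0, hα0, hfq, hpq]
  have hLf1 : L f 1 = qt + m := by linarith [hW]
  -- Weierstrass approximation
  set δ : ℝ := ε / (8 * π) with hδdef
  have hδ : 0 < δ := by positivity
  obtain ⟨P₀, hP₀⟩ := exists_polynomial_near_of_continuousOn 0 1 F hFc.continuousOn δ hδ
  -- correct the endpoints
  set P : Polynomial ℝ := P₀ + Polynomial.C (qt - P₀.eval 0) * (1 - Polynomial.X)
      + Polynomial.C (qt + m - P₀.eval 1) * Polynomial.X with hP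
  have hPeval : ∀ x : ℝ, P.eval x
      = P₀.eval x + (qt - P₀.eval 0) * (1 - x) + (qt + m - P₀.eval 1) * x := by
    intro x; simp [hP]
  have hP0 : P.eval 0 = qt := by rw [hPeval]; ring
  have hP1 : P.eval 1 = qt + m := by rw [hPeval]; ring
  have he0 : |qt - P₀.eval 0| < δ := by
    have := hP₀ 0 (by norm_num)
    have h0 : F 0 = qt := by
      have := hFt 0; rwa [Set.Icc.coe_zero, hLf0] at this
    rw [abs_sub_comm]; rwa [h0] at this
  have he1 : |qt + m - P₀.eval 1| < δ := by
    have := hP₀ 1 (by norm_num)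
    have h1 : F 1 = qt + m := by
      have := hFt 1; rwa [Set.Icc.coe_one, hLf1] at this
    rw [abs_sub_comm]; rwa [h1] at this
  have hPnear : ∀ x ∈ Set.Icc (0:ℝ) 1, |P.eval x - F x| < 2 * δ := by
    intro x hx
    have h1 := hP₀ x hx
    have hx0 : (0:ℝ) ≤ x := hx.1
    have hx1 : x ≤ 1 := hx.2
    have : |P.eval x - F x| ≤ |P₀.eval x - F x| + |qt - P₀.eval 0| * (1 - x)
        + |qt + m - P₀.eval 1| * x := by
      rw [hPeval]
      calc |P₀.eval x + (qt - P₀.eval 0) * (1 - x) + (qt + m - P₀.eval 1) * x - F x|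
          ≤ |P₀.eval x - F x| + |(qt - P₀.eval 0) * (1 - x)| + |(qt + m - P₀.eval 1) * x| := by
            have := abs_add_le (P₀.eval x - F x + (qt - P₀.eval 0) * (1 - x))
              ((qt + m - P₀.eval 1) * x)
            have h2 := abs_add_le (P₀.eval x - F x) ((qt - P₀.eval 0) * (1 - x))
            calc |P₀.eval x + (qt - P₀.eval 0) * (1 - x) + (qt + m - P₀.eval 1) * x - F x|
                = |(P₀.eval x - F x + (qt - P₀.eval 0) * (1 - x)) + (qt + m - P₀.eval 1) * x| := by
                  ring_nf
              _ ≤ _ := by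
                  refine le_trans this ?_; linarith
        _ = _ := by
            rw [abs_mul, abs_mul, abs_of_nonneg (by linarith : (0:ℝ) ≤ 1 - x),
              abs_of_nonneg hx0]
    have hb0 : |qt - P₀.eval 0| * (1 - x) ≤ δ * (1 - x) :=
      mul_le_mul_of_nonneg_right he0.le (by linarith)
    have hb1 : |qt + m - P₀.eval 1| * x ≤ δ * x :=
      mul_le_mul_of_nonneg_right he1.le hx0
    nlinarith
  -- build g
  set G : ℝ → Circle := fun x => p (P.eval x) with hG
  have hG01 : G 0 = G 1 := by
    show p (P.eval 0) = p (P.eval 1)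
    exact p_eq_p_iff.mpr ⟨-m, by rw [hP0, hP1]; push_cast; ring⟩
  have hGc : Continuous G := by
    rw [hG]; unfold p
    exact Circle.exp.continuous.comp (continuous_const.mul P.continuous)
  set g0 : Circle → Circle :=
    (AddCircle.liftIco 1 0 G) ∘ (AddCircle.homeomorphCircle one_ne_zero).symm with hg0
  have hg0c : Continuous g0 := by
    refine Continuous.comp ?_ (Homeomorph.continuous _)
    exact AddCircle.liftIco_zero_continuous hG01 hGc.continuousOn
  -- coincidence on [0,1)
  have hcoin : ∀ x : ℝ, x ∈ Set.Ico (0:ℝ) 1 → g0 (p x) = p (P.eval x) := by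
    intro x hx
    have key : (AddCircle.homeomorphCircle (one_ne_zero : (1:ℝ) ≠ 0)) ((x : AddCircle (1:ℝ)))
        = p x := by
      rw [AddCircle.homeomorphCircle_apply, AddCircle.toCircle_apply_mk]
      simp [p, div_one]
    have hsymm : (AddCircle.homeomorphCircle (one_ne_zero : (1:ℝ) ≠ 0)).symm (p x)
        = (x : AddCircle (1:ℝ)) := by
      rw [← key, Homeomorph.symm_apply_apply]
    show (AddCircle.liftIco 1 0 G) ((AddCircle.homeomorphCircle one_ne_zero).symm (p x)) = _
    rw [hsymm]
    exact AddCircle.liftIco_zero_coe_apply hx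
  set g : C(Circle, Circle) := ⟨g0, hg0c⟩ with hg
  -- p (L g t) = p (P.eval t) for all t
  have hkey : ∀ t : unitInterval, p (L g t) = p (P.eval (t : ℝ)) := by
    intro t
    rw [hlift g t]
    show g0 (p (t : ℝ)) = _
    rcases lt_or_eq_of_le t.2.2 with h | h
    · exact hcoin _ ⟨t.2.1, h⟩
    · have hpt : p (t : ℝ) = p 0 := by
        rw [h]; exact p_eq_p_iff.mpr ⟨1, by norm_num⟩
      rw [hpt, hcoin 0 (by norm_num)]
      rw [h, hP1, hP0]
      exact p_eq_p_iff.mpr ⟨-m, by push_cast; ring⟩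
  -- the difference is a constant integer, namely 0
  have hint : ∀ t : unitInterval, ∃ n : ℤ, L g t - P.eval (t : ℝ) = n := by
    intro t
    obtain ⟨n, hn⟩ := p_eq_p_iff.mp (hkey t)
    exact ⟨n, by linarith⟩
  set N : unitInterval → ℤ := fun t => (hint t).choose with hN
  have hNspec : ∀ t, L g t - P.eval (t : ℝ) = (N t : ℝ) := fun t => (hint t).choose_spec
  have hNc : Continuous N := by
    rw [Int.isClosedEmbedding_coe_real.isEmbedding.continuous_iff]
    have : (fun t => ((N t : ℝ))) = fun t : unitInterval => L g t - P.eval (t : ℝ) := by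
      ext t; rw [hNspec]
    rw [show ((↑) : ℤ → ℝ) ∘ N = fun t => ((N t : ℝ)) from rfl, this]
    exact ((L g).continuous).sub (P.continuous.comp continuous_subtype_val)
  have hNconst : ∀ t : unitInterval, N t = N 0 :=
    fun t => PreconnectedSpace.constant inferInstance hNc
  have hN0 : N 0 = 0 := by
    have h1 := hNspec 0
    rw [Set.Icc.coe_zero, hP0] at h1
    have hg0mem := hL0 g
    have : |(N 0 : ℝ)| < 1 := by
      rw [← h1, abs_lt]
      simp only [Set.mem_Ico] at hg0mem hqt
      constructor <;> linarith [hg0mem.1, hg0mem.2, hqt.1, hqt.2]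
    exact_mod_cast (by rwa [← Int.cast_abs, ← Int.cast_one, Int.cast_lt,
      Int.abs_lt_one_iff] at this : N 0 = 0)
  have hLg : ∀ t : unitInterval, L g t = P.eval (t : ℝ) := by
    intro t
    have := hNspec t
    rw [hNconst t, hN0] at this
    push_cast at this; linarith
  have hLg0 : L g 0 = qt := by rw [hLg 0, Set.Icc.coe_zero, hP0]
  have hLg1 : L g 1 = qt + m := by rw [hLg 1, Set.Icc.coe_one, hP1]
  refine ⟨g, ?_, by rw [hLg0, hLg1]; ring, ⟨P, hLg⟩, hLg0, hLg1, ?_⟩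
  · show g0 1 = q
    rw [← hp0, hcoin 0 (by norm_num), hP0, hpq]
  · have hsup : (⨆ t, |L f t - L g t|) ≤ 2 * δ := by
      apply ciSup_le
      intro t
      rw [hLg t, ← hFt t]
      rw [abs_sub_comm]
      exact (hPnear (t : ℝ) t.2).le
    calc 2 * π * ⨆ t, |L f t - L g t| ≤ 2 * π * (2 * δ) := by
          apply mul_le_mul_of_nonneg_left hsup (by positivity)
      _ = ε / 2 := by rw [hδdef]; field_simp; ring
      _ < ε := by linarith
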